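/- In the free associative algebra on generators Z₁, Z₁₁, Z₂, Z₂₂, Z₁₂ modulo the two-sided ideal generated by [Z₁,Z₂], [Z₁,Z₂₂], [Z₁₁,Z₂], [Z₁₁,Z₂₂]+[Z₁₁,Z₁₂], [Z₁₁,Z₂₂]+[Z₁₂,Z₂₂], [Z₁₁,Z₂₂]+[Z₁−Z₂,Z₁₂], the multiplication map gives a linear isomorphism U(𝔛^{(1)}) ⊗ U(𝔛^{(2)}) ≅ U(𝔛), where 𝔛^{(1)} is the free Lie subalgebra on Z₁,Z₁₁,Z₁₂ and 𝔛^{(2)} the free Lie subalgebra on Z₂,Z₂₂; equivalently, the products W₁W₂ of a word W₁ in {Z₁,Z₁₁,Z₁₂} and a word W₂ in {Z₂,Z₂₂} form a basis of U(𝔛). -/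

import Mathlib

namespace Stmt19

/-- The free associative `ℂ`-algebra on the generators `Z₁, Z₁₁, Z₂, Z₂₂, Z₁₂`
(indexed by `0, 1, 2, 3, 4`). -/
abbrev F5 := FreeAlgebra ℂ (Fin 5)

/-- The generators. -/
noncomputable def X5 (i : Fin 5) : F5 := FreeAlgebra.ι ℂ i

/-- Commutator in the associative algebra. -/
noncomputable def br (a b : F5) : F5 := a * b - b * a

/-- The defining relations (each relator set to `0`):
`[Z₁,Z₂]`, `[Z₁,Z₂₂]`, `[Z₁₁,Z₂]`, `[Z₁₁,Z₂₂]+[Z₁₁,Z₁₂]`, `[Z₁₁,Z₂₂]+[Z₁₂,Z₂₂]`,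
`[Z₁₁,Z₂₂]+[Z₁−Z₂,Z₁₂]`, where `(Z₁,Z₁₁,Z₂,Z₂₂,Z₁₂) = (X5 0, X5 1, X5 2, X5 3, X5 4)`. -/
inductive KZRel : F5 → F5 → Prop
  | r1 : KZRel (br (X5 0) (X5 2)) 0
  | r2 : KZRel (br (X5 0) (X5 3)) 0
  | r3 : KZRel (br (X5 1) (X5 2)) 0
  | r4 : KZRel (br (X5 1) (X5 3) + br (X5 1) (X5 4)) 0
  | r5 : KZRel (br (X5 1) (X5 3) + br (X5 4) (X5 3)) 0
  | r6 : KZRel (br (X5 1) (X5 3) + br (X5 0 - X5 2) (X5 4)) 0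

/-- The quotient `U(𝔛)` of the free algebra by the two-sided ideal generated by the
relations; this is the universal enveloping algebra of the Lie algebra `𝔛`. -/
abbrev UA := RingQuot KZRel

/-- The quotient map. -/
noncomputable def π5 : F5 →ₐ[ℂ] UA := RingQuot.mkAlgHom ℂ KZRel

/-- The generators `Z₁, Z₁₁, Z₁₂` of `𝔛^{(1)}` inside `U(𝔛)`. -/
noncomputable def g1 : Fin 3 → UA := ![π5 (X5 0), π5 (X5 1), π5 (X5 4)]

/-- The generators `Z₂, Z₂₂` of `𝔛^{(2)}` inside `U(𝔛)`. -/
noncomputable def g2 : Fin 2 → UA := ![π5 (X5 2), π5 (X5 3)]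

/-- The family of products `W₁·W₂` of a word `W₁` in `{Z₁,Z₁₁,Z₁₂}` and a word
`W₂` in `{Z₂,Z₂₂}`. -/
noncomputable def wordProd : List (Fin 3) × List (Fin 2) → UA :=
  fun p => (p.1.map g1).prod * (p.2.map g2).prod


open TensorProduct

noncomputable section

abbrev AA := FreeAlgebra ℂ (Fin 3)
abbrev BB := FreeAlgebra ℂ (Fin 2)
def aι (i : Fin 3) : AA := FreeAlgebra.ι ℂ i
def bι (i : Fin 2) : BB := FreeAlgebra.ι ℂ i

/-- bracket in AA -/
def cA (x y : AA) : AA := x * y - y * x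

/-- values of the two derivations on generators -/
def dval : Fin 2 → Fin 3 → AA :=
  ![![0, 0, cA (aι 0) (aι 2) - cA (aι 1) (aι 2)],
    ![0, cA (aι 1) (aι 2), cA (aι 2) (aι 1)]]

/-- algebra hom into the trivial square-zero extension encoding the derivation -/
def φd (j : Fin 2) : AA →ₐ[ℂ] TrivSqZeroExt AA AA :=
  FreeAlgebra.lift ℂ (fun i => TrivSqZeroExt.inl (aι i) + TrivSqZeroExt.inr (dval j i))

lemma fst_φd (j : Fin 2) (x : AA) : (φd j x).fst = x := by
  have : (TrivSqZeroExt.fstHom ℂ AA AA).comp (φd j) = AlgHom.id ℂ AA := by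
    apply FreeAlgebra.hom_ext
    funext i
    simp [φd, aι]
  exact DFunLike.congr_fun this x

/-- the derivation -/
def D (j : Fin 2) : AA →ₗ[ℂ] AA where
  toFun x := (φd j x).snd
  map_add' x y := by simp
  map_smul' c x := by simp

lemma D_apply (j : Fin 2) (x : AA) : D j x = (φd j x).snd := rfl

lemma D_one (j : Fin 2) : D j 1 = 0 := by
  simp [D_apply]

lemma D_gen (j : Fin 2) (i : Fin 3) : D j (aι i) = dval j i := by
  simp [D_apply, φd, aι]

lemma D_mul (j : Fin 2) (x y : AA) : D j (x * y) = x * D j y + D j x * y := by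
  simp only [D_apply, map_mul, TrivSqZeroExt.snd_mul, fst_φd, smul_eq_mul, op_smul_eq_mul]


/-- the representation space -/
abbrev V := AA ⊗[ℂ] BB

/-- left multiplication operator on the first factor -/
def La (x : AA) : Module.End ℂ V := LinearMap.rTensor BB (LinearMap.mulLeft ℂ x)

/-- left multiplication operator on the second factor -/
def Lb (y : BB) : Module.End ℂ V := LinearMap.lTensor AA (LinearMap.mulLeft ℂ y)

/-- derivation operator on the first factor -/
def Dt (j : Fin 2) : Module.End ℂ V := LinearMap.rTensor BB (D j)

lemma La_mul (x y : AA) : La (x * y) = La x * La y := by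
  have : LinearMap.mulLeft ℂ (x * y) = LinearMap.mulLeft ℂ x ∘ₗ LinearMap.mulLeft ℂ y := by
    ext z; simp [mul_assoc]
  rw [La, this, LinearMap.rTensor_comp]; rfl

lemma La_sub (x y : AA) : La (x - y) = La x - La y := by
  have : LinearMap.mulLeft ℂ (x - y) = LinearMap.mulLeft ℂ x - LinearMap.mulLeft ℂ y := by
    ext z; simp [sub_mul]
  rw [La, this, LinearMap.rTensor_sub]; rfl

lemma La_add (x y : AA) : La (x + y) = La x + La y := by
  have : LinearMap.mulLeft ℂ (x + y) = LinearMap.mulLeft ℂ x + LinearMap.mulLeft ℂ y := by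
    ext z; simp [add_mul]
  rw [La, this, LinearMap.rTensor_add]; rfl

lemma La_zero : La 0 = 0 := by
  have : LinearMap.mulLeft ℂ (0 : AA) = 0 := by ext z; simp
  rw [La, this]; exact LinearMap.rTensor_zero BB

/-- commutator of the derivation operator with left multiplication -/
lemma Dt_La (j : Fin 2) (x : AA) : Dt j * La x = La x * Dt j + La (D j x) := by
  have : D j ∘ₗ LinearMap.mulLeft ℂ x
      = LinearMap.mulLeft ℂ x ∘ₗ D j + LinearMap.mulLeft ℂ (D j x) := by
    ext z; simp [D_mul]
  show LinearMap.rTensor BB (D j) ∘ₗ LinearMap.rTensor BB (LinearMap.mulLeft ℂ x) = _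
  rw [← LinearMap.rTensor_comp, this, LinearMap.rTensor_add, LinearMap.rTensor_comp]; rfl

lemma Lb_La (y : BB) (x : AA) : Lb y * La x = La x * Lb y := by
  show LinearMap.lTensor AA (LinearMap.mulLeft ℂ y) ∘ₗ LinearMap.rTensor BB (LinearMap.mulLeft ℂ x) = _
  rw [LinearMap.lTensor_comp_rTensor, ← LinearMap.rTensor_comp_lTensor]; rfl

lemma Lb_Dt (y : BB) (j : Fin 2) : Lb y * Dt j = Dt j * Lb y := by
  show LinearMap.lTensor AA (LinearMap.mulLeft ℂ y) ∘ₗ LinearMap.rTensor BB (D j) = _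
  rw [LinearMap.lTensor_comp_rTensor, ← LinearMap.rTensor_comp_lTensor]; rfl

/-- commutator of a `𝔛^{(2)}`-type operator with left multiplication -/
lemma E_La (j : Fin 2) (y : BB) (x : AA) :
    (Dt j + Lb y) * La x = La x * (Dt j + Lb y) + La (D j x) := by
  rw [add_mul, mul_add, Dt_La, Lb_La]; abel

end

-- ================= the representation =================
noncomputable section
open TensorProduct

/-- images of the five generators -/
def gensE : Fin 5 → Module.End ℂ V :=
  ![La (aι 0), La (aι 1), Dt 0 + Lb (bι 0), Dt 1 + Lb (bι 1), La (aι 2)]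

def ρ0 : F5 →ₐ[ℂ] Module.End ℂ V := FreeAlgebra.lift ℂ gensE

lemma ρ0_X5 (i : Fin 5) : ρ0 (X5 i) = gensE i := by
  simp [ρ0, X5]

lemma La_comm (x y : AA) : La x * La y - La y * La x = La (cA x y) := by
  rw [cA, La_sub, La_mul, La_mul]

lemma hrel : ∀ ⦃x y : F5⦄, KZRel x y → ρ0 x = ρ0 y := by
  have e0 : ρ0 (X5 0) = La (aι 0) := by rw [ρ0_X5]; rfl
  have e1 : ρ0 (X5 1) = La (aι 1) := by rw [ρ0_X5]; rfl
  have e2 : ρ0 (X5 2) = Dt 0 + Lb (bι 0) := by rw [ρ0_X5]; rfl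
  have e3 : ρ0 (X5 3) = Dt 1 + Lb (bι 1) := by rw [ρ0_X5]; rfl
  have e4 : ρ0 (X5 4) = La (aι 2) := by rw [ρ0_X5]; rfl
  intro x y h
  cases h <;>
  · simp only [br, map_add, map_sub, map_mul, map_zero, e0, e1, e2, e3, e4]
    simp only [sub_mul, mul_sub, add_mul, mul_add, Dt_La, Lb_La, D_gen, dval, cA,
      Matrix.cons_val_zero, Matrix.cons_val_one,
      Matrix.head_cons, Matrix.cons_val_two, Matrix.tail_cons,
      La_sub, La_mul, La_zero]
    noncomm_ring
    all_goals simp only [add_mul, mul_add, smul_mul_assoc, mul_smul_comm, Dt_La, Lb_La, D_gen, dval, cA,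
      Matrix.cons_val_zero, Matrix.cons_val_one,
      Matrix.head_cons, Matrix.cons_val_two, Matrix.tail_cons,
      La_sub, La_mul, La_zero]
    all_goals abel

def ρ : UA →ₐ[ℂ] Module.End ℂ V := RingQuot.liftAlgHom ℂ ⟨ρ0, hrel⟩

lemma ρ_π5 (x : F5) : ρ (π5 x) = ρ0 x := by
  show RingQuot.liftAlgHom ℂ ⟨ρ0, hrel⟩ (RingQuot.mkAlgHom ℂ KZRel x) = ρ0 x
  exact RingQuot.liftAlgHom_mkAlgHom_apply ℂ ρ0 hrel x

lemma La_one : La 1 = 1 := by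
  have : LinearMap.mulLeft ℂ (1 : AA) = LinearMap.id := by ext z; simp
  rw [La, this]; exact LinearMap.rTensor_id BB AA

/-- word in the first free algebra -/
def wA (l : List (Fin 3)) : AA := (l.map aι).prod
/-- word in the second free algebra -/
def wB (l : List (Fin 2)) : BB := (l.map bι).prod

lemma ρ_g1 (i : Fin 3) : ρ (g1 i) = La (aι i) := by
  fin_cases i <;>
  · show ρ (π5 _) = _
    rw [ρ_π5, ρ0_X5]; rfl

lemma ρ_g2 (j : Fin 2) : ρ (g2 j) = Dt j + Lb (bι j) := by
  fin_cases j <;>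
  · show ρ (π5 _) = _
    rw [ρ_π5, ρ0_X5]; rfl

lemma ρ_w1 (l : List (Fin 3)) : ρ ((l.map g1).prod) = La (wA l) := by
  induction l with
  | nil => simpa [wA] using La_one.symm
  | cons i t ih =>
    rw [List.map_cons, List.prod_cons, map_mul, ih, ρ_g1, ← La_mul]
    rfl

lemma ρ_w2_apply (l : List (Fin 2)) (y : BB) :
    ρ ((l.map g2).prod) ((1 : AA) ⊗ₜ[ℂ] y) = (1 : AA) ⊗ₜ[ℂ] (wB l * y) := by
  induction l with
  | nil => simp [wB]
  | cons j t ih =>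
    rw [List.map_cons, List.prod_cons, map_mul, Module.End.mul_apply, ih, ρ_g2]
    show Dt j (1 ⊗ₜ[ℂ] (wB t * y)) + Lb (bι j) (1 ⊗ₜ[ℂ] (wB t * y)) = _
    rw [Dt, Lb, LinearMap.rTensor_tmul, LinearMap.lTensor_tmul, D_one]
    show (0 : AA) ⊗ₜ[ℂ] _ + _ ⊗ₜ[ℂ] (bι j * (wB t * y)) = _
    rw [TensorProduct.zero_tmul, zero_add]
    simp [wB, mul_assoc]

/-- evaluation of the representation at the vacuum vector -/
def Φ : UA →ₗ[ℂ] V := (LinearMap.applyₗ ((1 : AA) ⊗ₜ[ℂ] (1 : BB))).comp ρ.toLinearMap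

lemma Φ_word (p : List (Fin 3) × List (Fin 2)) :
    Φ (wordProd p) = wA p.1 ⊗ₜ[ℂ] wB p.2 := by
  obtain ⟨l₁, l₂⟩ := p
  show ρ ((l₁.map g1).prod * (l₂.map g2).prod) ((1 : AA) ⊗ₜ[ℂ] (1 : BB)) = _
  rw [map_mul, Module.End.mul_apply, ρ_w2_apply, ρ_w1, La, LinearMap.rTensor_tmul]
  show (wA l₁ * 1) ⊗ₜ[ℂ] (wB l₂ * 1) = _
  rw [mul_one, mul_one]

lemma basisFreeMonoid_apply {X : Type} (l : List X) :
    FreeAlgebra.basisFreeMonoid ℂ X (FreeMonoid.ofList l) = (l.map (FreeAlgebra.ι ℂ)).prod := by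
  rw [FreeAlgebra.basisFreeMonoid, Module.Basis.map_apply]
  have key : ∀ l : List X,
      (FreeAlgebra.equivMonoidAlgebraFreeMonoid (R := ℂ) (X := X)).symm
        (MonoidAlgebra.single (FreeMonoid.ofList l) 1) = (l.map (FreeAlgebra.ι ℂ)).prod := by
    intro l
    induction l with
    | nil =>
      rw [FreeMonoid.ofList_nil, List.map_nil, List.prod_nil]
      exact map_one _
    | cons x t ih =>
      rw [FreeMonoid.ofList_cons, ← one_mul (1 : ℂ), ← MonoidAlgebra.single_mul_single, map_mul,
        ih, List.map_cons, List.prod_cons]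
      congr 1
      apply (AlgEquiv.symm_apply_eq _).mpr
      show MonoidAlgebra.single (FreeMonoid.of x) 1 = _
      simp [FreeAlgebra.equivMonoidAlgebraFreeMonoid, MonoidAlgebra.of_apply]
  simpa using key l

lemma linearIndependent_words : LinearIndependent ℂ wordProd := by
  apply LinearIndependent.of_comp Φ
  have hb := ((FreeAlgebra.basisFreeMonoid ℂ (Fin 3)).tensorProduct
      (FreeAlgebra.basisFreeMonoid ℂ (Fin 2))).linearIndependent
  have hinj : Function.Injective
      (fun p : List (Fin 3) × List (Fin 2) =>
        (FreeMonoid.ofList p.1, FreeMonoid.ofList p.2)) := by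
    intro p q h
    exact Prod.ext (FreeMonoid.ofList.injective (congrArg Prod.fst h))
      (FreeMonoid.ofList.injective (congrArg Prod.snd h))
  have := hb.comp _ hinj
  convert this using 1
  funext p
  show Φ (wordProd p) = _
  rw [Φ_word, Function.comp_apply, Module.Basis.tensorProduct_apply, basisFreeMonoid_apply,
    basisFreeMonoid_apply]
  rfl
  all_goals rfl

end

-- ================= spanning =================
noncomputable section

/-- the span of the word products -/
abbrev SS : Submodule ℂ UA := Submodule.span ℂ (Set.range wordProd)

lemma wordProd_mem (p : List (Fin 3) × List (Fin 2)) : wordProd p ∈ SS :=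
  Submodule.subset_span ⟨p, rfl⟩

lemma g1_cons (i : Fin 3) (l₁ : List (Fin 3)) (l₂ : List (Fin 2)) :
    g1 i * wordProd (l₁, l₂) = wordProd (i :: l₁, l₂) := by
  simp [wordProd, mul_assoc]

lemma g2_nil (j : Fin 2) (l₂ : List (Fin 2)) :
    g2 j * wordProd ([], l₂) = wordProd ([], j :: l₂) := by
  simp [wordProd]

lemma mul_g1_mem (i : Fin 3) {x : UA} (hx : x ∈ SS) : g1 i * x ∈ SS := by
  induction hx using Submodule.span_induction with
  | mem x h =>
    obtain ⟨⟨l₁, l₂⟩, rfl⟩ := h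
    rw [g1_cons]; exact wordProd_mem _
  | zero => simp
  | add a b _ _ ha hb => rw [mul_add]; exact SS.add_mem ha hb
  | smul c a _ ha => rw [mul_smul_comm]; exact SS.smul_mem c ha

/-- correction terms for moving a `g2` generator past a `g1` generator -/
def cmat : Fin 2 → Fin 3 → UA :=
  ![![0, 0, g1 0 * g1 2 - g1 2 * g1 0 - (g1 1 * g1 2 - g1 2 * g1 1)],
    ![0, g1 1 * g1 2 - g1 2 * g1 1, g1 2 * g1 1 - g1 1 * g1 2]]

lemma hcomm (j : Fin 2) (i : Fin 3) : g2 j * g1 i = g1 i * g2 j + cmat j i := by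
  obtain ⟨a, ha⟩ : ∃ t, π5 (X5 0) = t := ⟨_, rfl⟩
  obtain ⟨b, hb⟩ : ∃ t, π5 (X5 1) = t := ⟨_, rfl⟩
  obtain ⟨z2, hz2⟩ : ∃ t, π5 (X5 2) = t := ⟨_, rfl⟩
  obtain ⟨z3, hz3⟩ : ∃ t, π5 (X5 3) = t := ⟨_, rfl⟩
  obtain ⟨c, hc⟩ : ∃ t, π5 (X5 4) = t := ⟨_, rfl⟩
  have mk : ∀ {x : F5}, KZRel x 0 → π5 x = 0 := by
    intro x h
    have := RingQuot.mkAlgHom_rel ℂ h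
    simpa [π5] using this
  have R1 : a * z2 - z2 * a = 0 := by
    have h := mk KZRel.r1; simp only [br, map_sub, map_mul] at h; rw [ha, hz2] at h; exact h
  have R2 : a * z3 - z3 * a = 0 := by
    have h := mk KZRel.r2; simp only [br, map_sub, map_mul] at h; rw [ha, hz3] at h; exact h
  have R3 : b * z2 - z2 * b = 0 := by
    have h := mk KZRel.r3; simp only [br, map_sub, map_mul] at h; rw [hb, hz2] at h; exact h
  have R4 : (b * z3 - z3 * b) + (b * c - c * b) = 0 := by
    have h := mk KZRel.r4; simp only [br, map_add, map_sub, map_mul] at h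
    rw [hb, hz3, hc] at h; exact h
  have R5 : (b * z3 - z3 * b) + (c * z3 - z3 * c) = 0 := by
    have h := mk KZRel.r5; simp only [br, map_add, map_sub, map_mul] at h
    rw [hb, hz3, hc] at h; exact h
  have R6 : (b * z3 - z3 * b) + ((a - z2) * c - c * (a - z2)) = 0 := by
    have h := mk KZRel.r6; simp only [br, map_add, map_sub, map_mul] at h
    rw [ha, hb, hz2, hz3, hc] at h; exact h
  fin_cases j <;> fin_cases i
  · show π5 (X5 2) * π5 (X5 0) = π5 (X5 0) * π5 (X5 2) + 0
    rw [ha, hz2, ← sub_eq_zero]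
    have e : z2 * a - (a * z2 + 0) = -(a * z2 - z2 * a) := by noncomm_ring
    rw [e, R1, neg_zero]
  · show π5 (X5 2) * π5 (X5 1) = π5 (X5 1) * π5 (X5 2) + 0
    rw [hb, hz2, ← sub_eq_zero]
    have e : z2 * b - (b * z2 + 0) = -(b * z2 - z2 * b) := by noncomm_ring
    rw [e, R3, neg_zero]
  · show π5 (X5 2) * π5 (X5 4) = π5 (X5 4) * π5 (X5 2) +
      (π5 (X5 0) * π5 (X5 4) - π5 (X5 4) * π5 (X5 0)
        - (π5 (X5 1) * π5 (X5 4) - π5 (X5 4) * π5 (X5 1)))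
    rw [ha, hb, hz2, hc, ← sub_eq_zero]
    have e : z2 * c - (c * z2 + (a * c - c * a - (b * c - c * b)))
        = -((b * z3 - z3 * b) + ((a - z2) * c - c * (a - z2)))
          + ((b * z3 - z3 * b) + (b * c - c * b)) := by
      simp only [sub_mul, mul_sub]; abel
    rw [e, R6, R4, neg_zero, add_zero]
  · show π5 (X5 3) * π5 (X5 0) = π5 (X5 0) * π5 (X5 3) + 0
    rw [ha, hz3, ← sub_eq_zero]
    have e : z3 * a - (a * z3 + 0) = -(a * z3 - z3 * a) := by noncomm_ring
    rw [e, R2, neg_zero]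
  · show π5 (X5 3) * π5 (X5 1) = π5 (X5 1) * π5 (X5 3)
      + (π5 (X5 1) * π5 (X5 4) - π5 (X5 4) * π5 (X5 1))
    rw [hb, hz3, hc, ← sub_eq_zero]
    have e : z3 * b - (b * z3 + (b * c - c * b))
        = -((b * z3 - z3 * b) + (b * c - c * b)) := by noncomm_ring
    rw [e, R4, neg_zero]
  · show π5 (X5 3) * π5 (X5 4) = π5 (X5 4) * π5 (X5 3)
      + (π5 (X5 4) * π5 (X5 1) - π5 (X5 1) * π5 (X5 4))
    rw [hb, hz3, hc, ← sub_eq_zero]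
    have e : z3 * c - (c * z3 + (c * b - b * c))
        = -((b * z3 - z3 * b) + (c * z3 - z3 * c))
          + ((b * z3 - z3 * b) + (b * c - c * b)) := by noncomm_ring
    rw [e, R5, R4, neg_zero, add_zero]

lemma two_mem (iA iB : Fin 3) (t : List (Fin 3)) (l₂ : List (Fin 2)) :
    g1 iA * g1 iB * wordProd (t, l₂) ∈ SS := by
  rw [mul_assoc, g1_cons, g1_cons]; exact wordProd_mem _

lemma cmat_mul_mem (j : Fin 2) (i : Fin 3) (t : List (Fin 3)) (l₂ : List (Fin 2)) :
    cmat j i * wordProd (t, l₂) ∈ SS := by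
  fin_cases j <;> fin_cases i
  · show (0 : UA) * wordProd (t, l₂) ∈ SS
    rw [zero_mul]; exact SS.zero_mem
  · show (0 : UA) * wordProd (t, l₂) ∈ SS
    rw [zero_mul]; exact SS.zero_mem
  · show (g1 0 * g1 2 - g1 2 * g1 0 - (g1 1 * g1 2 - g1 2 * g1 1)) * wordProd (t, l₂) ∈ SS
    rw [sub_mul, sub_mul, sub_mul]
    exact SS.sub_mem (SS.sub_mem (two_mem _ _ _ _) (two_mem _ _ _ _))
      (SS.sub_mem (two_mem _ _ _ _) (two_mem _ _ _ _))
  · show (0 : UA) * wordProd (t, l₂) ∈ SS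
    rw [zero_mul]; exact SS.zero_mem
  · show (g1 1 * g1 2 - g1 2 * g1 1) * wordProd (t, l₂) ∈ SS
    rw [sub_mul]
    exact SS.sub_mem (two_mem _ _ _ _) (two_mem _ _ _ _)
  · show (g1 2 * g1 1 - g1 1 * g1 2) * wordProd (t, l₂) ∈ SS
    rw [sub_mul]
    exact SS.sub_mem (two_mem _ _ _ _) (two_mem _ _ _ _)

lemma g2_word_mem (j : Fin 2) (l₁ : List (Fin 3)) (l₂ : List (Fin 2)) :
    g2 j * wordProd (l₁, l₂) ∈ SS := by
  induction l₁ with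
  | nil => rw [g2_nil]; exact wordProd_mem _
  | cons i t ih =>
    have h : g2 j * wordProd (i :: t, l₂)
        = g1 i * (g2 j * wordProd (t, l₂)) + cmat j i * wordProd (t, l₂) := by
      rw [← g1_cons, ← mul_assoc, hcomm, add_mul, mul_assoc]
    rw [h]
    exact SS.add_mem (mul_g1_mem i ih) (cmat_mul_mem j i t l₂)

lemma mul_g2_mem (j : Fin 2) {x : UA} (hx : x ∈ SS) : g2 j * x ∈ SS := by
  induction hx using Submodule.span_induction with
  | mem x h =>
    obtain ⟨⟨l₁, l₂⟩, rfl⟩ := h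
    exact g2_word_mem j l₁ l₂
  | zero => simp
  | add a b _ _ ha hb => rw [mul_add]; exact SS.add_mem ha hb
  | smul c a _ ha => rw [mul_smul_comm]; exact SS.smul_mem c ha

lemma mul_gen_mem (i : Fin 5) {x : UA} (hx : x ∈ SS) : π5 (X5 i) * x ∈ SS := by
  fin_cases i
  · exact mul_g1_mem 0 hx
  · exact mul_g1_mem 1 hx
  · exact mul_g2_mem 0 hx
  · exact mul_g2_mem 1 hx
  · exact mul_g1_mem 2 hx

lemma span_words_top : Submodule.span ℂ (Set.range wordProd) = ⊤ := by
  rw [Submodule.eq_top_iff']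
  intro x
  have key : ∀ y : F5, ∀ x, x ∈ SS → π5 y * x ∈ SS := by
    intro y
    refine FreeAlgebra.induction ℂ (Fin 5)
      (motive := fun y => ∀ x, x ∈ SS → π5 y * x ∈ SS) ?_ ?_ ?_ ?_ y
    · intro r x hx
      rw [AlgHom.commutes, ← Algebra.smul_def]
      exact SS.smul_mem r hx
    · intro i x hx
      exact mul_gen_mem i hx
    · intro p q hp hq x hx
      rw [map_mul, mul_assoc]
      exact hp _ (hq _ hx)
    · intro p q hp hq x hx
      rw [map_add, add_mul]
      exact SS.add_mem (hp _ hx) (hq _ hx)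
  have h1 : (1 : UA) ∈ SS := by
    simpa [wordProd] using wordProd_mem ([], [])
  obtain ⟨y, rfl⟩ := RingQuot.mkAlgHom_surjective ℂ KZRel x
  have := key y 1 h1
  simpa [π5] using this

end

/-- the products `W₁W₂` form a basis of `U(𝔛)`; equivalently the
multiplication map gives a linear isomorphism `U(𝔛^{(1)}) ⊗ U(𝔛^{(2)}) ≅ U(𝔛)`. -/
theorem tensor_decomposition :
    LinearIndependent ℂ wordProd ∧ Submodule.span ℂ (Set.range wordProd) = ⊤ :=
  ⟨linearIndependent_words, span_words_top⟩

end Stmt19
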